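/- If the index set T of the family 𝒫 = {P_t : t ∈ T} is finite, then the estimator Ê̲_n^𝒫(f) := min_{t∈T} (1/n) ∑_{k=1}^n f_t(X_k^P) is a strongly consistent estimator of the lower expectation E̲^𝒫(f) := min_{t∈T} E^{P_t}(f); that is, Ê̲_n^𝒫(f) → E̲^𝒫(f) P^∞-almost surely as n → ∞ (the estimator is measurable since T is finite). -/

import Mathlib

open MeasureTheory Filter Topology ProbabilityTheory

noncomputable section

/-- If the index set `T` is finite, then the (measurable) estimator
`Ê̲_n^𝒫(f) = min_{t∈T} (1/n) ∑_{k=1}^n f_t(X_k)` converges `P^∞`-almost surely to the lower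
expectation `E̲^𝒫(f) = min_{t∈T} E^{P_t}(f)`. -/
theorem finite_index_consistency
    {T : Type*} [Fintype T] [Nonempty T]
    (Pt : T → Measure ℝ) (hPt : ∀ t, IsProbabilityMeasure (Pt t))
    (P : Measure ℝ) [IsProbabilityMeasure P]
    (f : ℝ → ℝ) (hf : Measurable f)
    (hfint : ∀ t, Integrable f (Pt t))
    (ft : T → ℝ → ℝ)
    (hftm : ∀ t, Measurable (ft t)) (hfti : ∀ t, Integrable (ft t) P)
    (hfte : ∀ t, ∫ x, ft t x ∂P = ∫ x, f x ∂(Pt t))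
    (hftea : ∀ t, ∫ x, |ft t x| ∂P = ∫ x, |f x| ∂(Pt t))
    (μ : Measure (ℕ → ℝ)) [IsProbabilityMeasure μ]
    (hmap : ∀ k : ℕ, μ.map (fun ω => ω k) = P)
    (hind : iIndepFun (fun k (ω : ℕ → ℝ) => ω k) μ) :
    ∀ᵐ ω ∂μ, Tendsto
      (fun n : ℕ => ⨅ t : T, (n : ℝ)⁻¹ * ∑ k ∈ Finset.range n, ft t (ω k))
      atTop (𝓝 (⨅ t : T, ∫ x, f x ∂(Pt t))) := by
  -- strong law for each t
  have hcoord : ∀ k : ℕ, Measurable (fun ω : ℕ → ℝ => ω k) := fun k =>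
    measurable_pi_apply k
  have key : ∀ t : T, ∀ᵐ ω ∂μ, Tendsto
      (fun n : ℕ => (n : ℝ)⁻¹ * ∑ k ∈ Finset.range n, ft t (ω k))
      atTop (𝓝 (∫ x, f x ∂(Pt t))) := by
    intro t
    set X : ℕ → (ℕ → ℝ) → ℝ := fun k ω => ft t (ω k) with hX
    have hXint : ∀ k, Integrable (X k) μ := by
      intro k
      have := (hfti t)
      rw [← hmap k, integrable_map_measure (hftm t).aestronglyMeasurable
        (hcoord k).aemeasurable] at this
      exact this
    have hindep : Pairwise (Function.onFun (IndepFun · · μ) X) := by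
      intro i j hij
      exact (hind.indepFun hij).comp (hftm t) (hftm t)
    have hident : ∀ k, IdentDistrib (X k) (X 0) μ μ := by
      intro k
      have hco : IdentDistrib (fun ω : ℕ → ℝ => ω k) (fun ω : ℕ → ℝ => ω 0) μ μ :=
        ⟨(hcoord k).aemeasurable, (hcoord 0).aemeasurable, by rw [hmap k, hmap 0]⟩
      exact hco.comp (hftm t)
    have hEX : μ[X 0] = ∫ x, f x ∂(Pt t) := by
      rw [← hfte t, ← hmap 0,
        integral_map (hcoord 0).aemeasurable (hftm t).aestronglyMeasurable]
    have := strong_law_ae_real X (hXint 0) hindep hident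
    rw [hEX] at this
    filter_upwards [this] with ω hω
    have : (fun n : ℕ => (n : ℝ)⁻¹ * ∑ k ∈ Finset.range n, ft t (ω k)) =
        fun n : ℕ => (∑ k ∈ Finset.range n, X k ω) / n := by
      funext n; rw [div_eq_inv_mul]
    rw [this]
    exact hω
  rw [← ae_all_iff] at key
  filter_upwards [key] with ω hω
  have h1 : ∀ n : ℕ, (⨅ t : T, (n : ℝ)⁻¹ * ∑ k ∈ Finset.range n, ft t (ω k)) =
      Finset.univ.inf' Finset.univ_nonempty
        (fun t : T => (n : ℝ)⁻¹ * ∑ k ∈ Finset.range n, ft t (ω k)) := fun n =>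
    (Finset.inf'_univ_eq_ciInf _).symm
  have h2 : (⨅ t : T, ∫ x, f x ∂(Pt t)) =
      Finset.univ.inf' Finset.univ_nonempty (fun t : T => ∫ x, f x ∂(Pt t)) :=
    (Finset.inf'_univ_eq_ciInf _).symm
  simp only [h1, h2]
  exact Filter.Tendsto.finset_inf'_nhds_apply Finset.univ_nonempty
    (fun t _ => hω t)
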